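/- Let G ⊂ ℝ × (0,∞) × ℝ^N be a bounded measurable set, let M > 0, and let f ∈ C²([−M,M]) with f''(θ) ≠ 0 for almost every θ ∈ [−M,M]. Let ρ : ℝ^N → [0,∞) be bounded and such that ρ(y) > 0 for almost every y appearing in G. Let (u^ε) be a family and u a function, all measurable on G with values in [−M,M], such that ∫_G [ (u^ε − u)∫_u^{u^ε} (f'(s))² ds − (f(u^ε) − f(u))² ] ρ(y)² d(x,t,y) → 0 as ε → 0. Then u^ε → u in Lebesgue measure on G, i.e., for every α > 0 the Lebesgue measure of {(x,t,y) ∈ G : |u^ε(x,t,y) − u(x,t,y)| > α} tends to 0 as ε → 0; in particular, some subsequence of (u^ε) converges to u almost everywhere on G. -/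

import Mathlib

open MeasureTheory Set Filter intervalIntegral

noncomputable section

namespace DefectAux

variable {f : ℝ → ℝ}

/-- variance identity -/
lemma ups_id (hf : ContDiff ℝ 2 f) {v w : ℝ} (hvw : v < w) :
    (w - v) * (∫ s in v..w, (deriv f s)^2) - (f w - f v)^2
      = (w - v) * ∫ s in v..w, (deriv f s - (f w - f v)/(w - v))^2 := by
  have hgc : Continuous (deriv f) := hf.continuous_deriv one_le_two
  have hFTC : (∫ s in v..w, deriv f s) = f w - f v :=
    intervalIntegral.integral_deriv_eq_sub
      (fun x _ => (hf.differentiable (by norm_num)).differentiableAt)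
      (hgc.intervalIntegrable v w)
  have hne : w - v ≠ 0 := sub_ne_zero.mpr hvw.ne'
  set c : ℝ := (f w - f v) / (w - v) with hc
  have hint2 : IntervalIntegrable (fun s => (deriv f s)^2) volume v w :=
    ((hgc.pow 2)).intervalIntegrable v w
  have hint1 : IntervalIntegrable (fun s => (2*c) * deriv f s) volume v w :=
    (continuous_const.mul hgc).intervalIntegrable v w
  have hsplit : (∫ s in v..w, (deriv f s - c)^2)
      = (∫ s in v..w, (deriv f s)^2) - (2*c) * (f w - f v) + c^2 * (w - v) := by
    have : (fun s => (deriv f s - c)^2)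
        = fun s => ((deriv f s)^2 - (2*c) * deriv f s) + c^2 := by
      funext s; ring
    rw [this, intervalIntegral.integral_add ((hint2.sub hint1)) (intervalIntegrable_const),
      intervalIntegral.integral_sub hint2 hint1, intervalIntegral.integral_const_mul,
      hFTC, intervalIntegral.integral_const]
    simp only [smul_eq_mul]
    ring
  rw [hsplit]
  have hcc : c * (w - v) = f w - f v := div_mul_cancel₀ _ hne
  nlinarith [hcc]

lemma ups_nonneg (hf : ContDiff ℝ 2 f) (v w : ℝ) :
    0 ≤ (w - v) * (∫ s in v..w, (deriv f s)^2) - (f w - f v)^2 := by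
  have hmain : ∀ a b : ℝ, a < b →
      0 ≤ (b - a) * (∫ s in a..b, (deriv f s)^2) - (f b - f a)^2 := by
    intro a b hab
    rw [ups_id hf hab]
    have : 0 ≤ ∫ s in a..b, (deriv f s - (f b - f a)/(b - a))^2 :=
      intervalIntegral.integral_nonneg hab.le (fun s _ => sq_nonneg _)
    exact mul_nonneg (by linarith) this
  rcases lt_trichotomy v w with h | h | h
  · exact hmain v w h
  · simp [h]
  · have := hmain w v h
    rw [intervalIntegral.integral_symm] at this
    nlinarith [this]

lemma ups_symm (f : ℝ → ℝ) (v w : ℝ) :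
    (w - v) * (∫ s in v..w, (deriv f s)^2) - (f w - f v)^2
      = (v - w) * (∫ s in w..v, (deriv f s)^2) - (f v - f w)^2 := by
  rw [intervalIntegral.integral_symm]; ring

lemma ups_pos (hf : ContDiff ℝ 2 f) {M v w : ℝ}
    (hf'' : ∀ᵐ θ ∂(volume.restrict (Icc (-M) M)), deriv (deriv f) θ ≠ 0)
    (hv : -M ≤ v) (hw : w ≤ M) (hvw : v < w) :
    0 < (w - v) * (∫ s in v..w, (deriv f s)^2) - (f w - f v)^2 := by
  rw [ups_id hf hvw]
  set c := (f w - f v)/(w - v) with hcdef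
  apply mul_pos (by linarith)
  have hgc : Continuous (deriv f) := hf.continuous_deriv one_le_two
  have hncon : ∃ x ∈ Ioo v w, deriv f x ≠ c := by
    by_contra hall
    push_neg at hall
    have h0 := (ae_restrict_iff' measurableSet_Icc).mp hf''
    rw [ae_iff] at h0
    have hsub : Ioo v w ⊆ {θ | ¬ (θ ∈ Icc (-M) M → deriv (deriv f) θ ≠ 0)} := by
      intro x hx
      simp only [mem_setOf_eq, Classical.not_imp, not_not]
      refine ⟨⟨by linarith [hx.1], by linarith [hx.2]⟩, ?_⟩
      have hev : deriv f =ᶠ[nhds x] fun _ => c := by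
        filter_upwards [isOpen_Ioo.mem_nhds hx] with y hy using hall y hy
      rw [hev.deriv_eq]
      exact deriv_const x c
    have hle := (measure_mono hsub).trans_eq h0
    rw [Real.volume_Ioo] at hle
    exact (ENNReal.ofReal_pos.mpr (sub_pos.mpr hvw)).not_ge hle
  obtain ⟨x, hx, hxc⟩ := hncon
  have hnn : (0:ℝ → ℝ) ≤ᵐ[volume] fun s => (deriv f s - c)^2 :=
    Filter.Eventually.of_forall fun s => sq_nonneg _
  have hint : IntervalIntegrable (fun s => (deriv f s - c)^2) volume v w :=
    ((hgc.sub continuous_const).pow 2).intervalIntegrable v w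
  rw [intervalIntegral.integral_pos_iff_support_of_nonneg_ae hnn hint]
  refine ⟨hvw, ?_⟩
  have hU : IsOpen ({y : ℝ | deriv f y ≠ c} ∩ Ioo v w) :=
    ((isClosed_eq hgc continuous_const).isOpen_compl).inter isOpen_Ioo
  have hpos' : 0 < volume ({y : ℝ | deriv f y ≠ c} ∩ Ioo v w) :=
    hU.measure_pos volume ⟨x, hxc, hx⟩
  refine hpos'.trans_le (measure_mono ?_)
  rintro y ⟨hy1, hy2⟩
  exact ⟨pow_ne_zero 2 (sub_ne_zero.mpr hy1), Ioo_subset_Ioc_self hy2⟩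

lemma ups_cont (hf : ContDiff ℝ 2 f) :
    Continuous
      (fun q : ℝ × ℝ => (q.2 - q.1) * (∫ s in q.1..q.2, (deriv f s)^2) - (f q.2 - f q.1)^2) := by
  have hgc : Continuous (deriv f) := hf.continuous_deriv one_le_two
  have hint : ∀ a b : ℝ, IntervalIntegrable (fun s => (deriv f s)^2) volume a b :=
    fun a b => (hgc.pow 2).intervalIntegrable a b
  have hF : Continuous (fun t => ∫ s in (0:ℝ)..t, (deriv f s)^2) :=
    intervalIntegral.continuous_primitive hint 0
  have heq : (fun q : ℝ × ℝ =>
        (q.2 - q.1) * (∫ s in q.1..q.2, (deriv f s)^2) - (f q.2 - f q.1)^2)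
      = fun q : ℝ × ℝ => (q.2 - q.1) *
          ((∫ s in (0:ℝ)..q.2, (deriv f s)^2) - (∫ s in (0:ℝ)..q.1, (deriv f s)^2))
          - (f q.2 - f q.1)^2 := by
    funext q
    rw [intervalIntegral.integral_interval_sub_left (hint 0 q.2) (hint 0 q.1)]
  rw [heq]
  exact ((continuous_snd.sub continuous_fst).mul
      ((hF.comp continuous_snd).sub (hF.comp continuous_fst))).sub
    (((hf.continuous.comp continuous_snd).sub (hf.continuous.comp continuous_fst)).pow 2)

end DefectAux

/-- convergence in measure (and a.e. convergence of a subsequence)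
from the vanishing of the compensated-compactness defect
`∫_G [ (u^ε − u)∫_u^{u^ε}(f')² − (f(u^ε) − f(u))² ] ρ²`. -/
theorem convergence_in_measure_from_defect
    (N : ℕ) (G : Set (ℝ × ℝ × (Fin N → ℝ)))
    (hGmeas : MeasurableSet G) (hGbdd : Bornology.IsBounded G)
    (hGsub : ∀ p ∈ G, 0 < p.2.1)
    (M : ℝ) (hM : 0 < M) (f : ℝ → ℝ) (hf : ContDiff ℝ 2 f)
    (hf'' : ∀ᵐ θ ∂(volume.restrict (Icc (-M) M)), deriv (deriv f) θ ≠ 0)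
    (ρ : (Fin N → ℝ) → ℝ) (hρmeas : Measurable ρ)
    (hρbdd : ∃ C, ∀ y, ρ y ≤ C) (hρnonneg : ∀ y, 0 ≤ ρ y)
    (hρpos : ∀ᵐ p ∂(volume.restrict G), 0 < ρ p.2.2)
    (uε : ℕ → (ℝ × ℝ × (Fin N → ℝ)) → ℝ) (u : (ℝ × ℝ × (Fin N → ℝ)) → ℝ)
    (huεmeas : ∀ n, Measurable (uε n)) (humeas : Measurable u)
    (huεval : ∀ n p, uε n p ∈ Icc (-M) M) (huval : ∀ p, u p ∈ Icc (-M) M)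
    (hdefect : Tendsto (fun n => ∫ p in G,
        ((uε n p - u p) * (∫ s in (u p)..(uε n p), (deriv f s) ^ 2)
          - (f (uε n p) - f (u p)) ^ 2) * (ρ p.2.2) ^ 2) atTop (nhds 0)) :
    (∀ α > 0, Tendsto (fun n => volume {p ∈ G | α < |uε n p - u p|}) atTop (nhds 0)) ∧
    ∃ σ : ℕ → ℕ, StrictMono σ ∧
      ∀ᵐ p ∂(volume.restrict G),
        Tendsto (fun n => uε (σ n) p) atTop (nhds (u p)) := by
  classical
  obtain ⟨C, hC⟩ := hρbdd
  set Υ : ℝ × ℝ → ℝ :=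
    fun q => (q.2 - q.1) * (∫ s in q.1..q.2, (deriv f s)^2) - (f q.2 - f q.1)^2 with hΥdef
  have hΥc : Continuous Υ := DefectAux.ups_cont hf
  have hGfin : volume G < ⊤ := hGbdd.measure_lt_top (μ := volume)
  have hρymeas : Measurable (fun p : ℝ × ℝ × (Fin N → ℝ) => ρ p.2.2) :=
    hρmeas.comp (measurable_snd.comp measurable_snd)
  have hρ2meas : Measurable (fun p : ℝ × ℝ × (Fin N → ℝ) => ρ p.2.2 ^ 2) := hρymeas.pow_const 2
  have hρ2bdd : ∀ p : ℝ × ℝ × (Fin N → ℝ), ρ p.2.2 ^ 2 ≤ C ^ 2 :=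
    fun p => pow_le_pow_left₀ (hρnonneg _) (hC _) 2
  obtain ⟨B, hB⟩ := (isCompact_Icc.prod isCompact_Icc).exists_bound_of_continuousOn
    (hΥc.continuousOn (s := Icc (-M) M ×ˢ Icc (-M) M))
  set Φ : ℕ → (ℝ × ℝ × (Fin N → ℝ)) → ℝ := fun n p =>
    ((uε n p - u p) * (∫ s in (u p)..(uε n p), (deriv f s) ^ 2)
      - (f (uε n p) - f (u p)) ^ 2) * (ρ p.2.2) ^ 2 with hΦdef
  have hΦeq : ∀ n p, Φ n p = Υ (u p, uε n p) * ρ p.2.2 ^ 2 := fun n p => rfl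
  have hΦmeas : ∀ n, Measurable (Φ n) := by
    intro n
    have : Measurable fun p : ℝ × ℝ × (Fin N → ℝ) => Υ (u p, uε n p) :=
      hΥc.measurable.comp (humeas.prodMk (huεmeas n))
    exact this.mul hρ2meas
  have hΦnn : ∀ n p, 0 ≤ Φ n p := by
    intro n p
    rw [hΦeq]
    exact mul_nonneg (DefectAux.ups_nonneg hf _ _) (sq_nonneg _)
  have hΦint : ∀ n, IntegrableOn (Φ n) G volume := by
    intro n
    refine Integrable.mono' (g := fun _ => B * C ^ 2) ?_
      ((hΦmeas n).aestronglyMeasurable) (Filter.Eventually.of_forall fun p => ?_)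
    · apply integrable_const_iff.mpr
      right
      refine ⟨?_⟩; rw [Measure.restrict_apply_univ]
      exact hGfin
    · rw [hΦeq]
      have h1 : ‖Υ (u p, uε n p)‖ ≤ B := hB _ (mem_prod.mpr ⟨huval p, huεval n p⟩)
      have hB0 : 0 ≤ B := le_trans (norm_nonneg _) h1
      calc ‖Υ (u p, uε n p) * ρ p.2.2 ^ 2‖ = ‖Υ (u p, uε n p)‖ * ρ p.2.2 ^ 2 := by
            rw [norm_mul, Real.norm_eq_abs (ρ p.2.2 ^ 2), abs_of_nonneg (sq_nonneg _)]
        _ ≤ B * C ^ 2 := mul_le_mul h1 (hρ2bdd p) (sq_nonneg _) hB0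
  have hρ2int : IntegrableOn (fun p : ℝ × ℝ × (Fin N → ℝ) => ρ p.2.2 ^ 2) G volume := by
    refine Integrable.mono' (g := fun _ => C ^ 2) ?_
      hρ2meas.aestronglyMeasurable (Filter.Eventually.of_forall fun p => ?_)
    · apply integrable_const_iff.mpr
      right
      refine ⟨?_⟩; rw [Measure.restrict_apply_univ]
      exact hGfin
    · rw [Real.norm_eq_abs, abs_of_nonneg (sq_nonneg _)]
      exact hρ2bdd p
  -- main claim: convergence in measure
  have claim1 : ∀ α > 0,
      Tendsto (fun n => volume {p ∈ G | α < |uε n p - u p|}) atTop (nhds 0) := by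
    intro α hα
    set A : ℕ → Set (ℝ × ℝ × (Fin N → ℝ)) := fun n => {p ∈ G | α < |uε n p - u p|} with hAdef
    have hAmeas : ∀ n, MeasurableSet (A n) :=
      fun n => hGmeas.inter
        (measurableSet_lt measurable_const ((huεmeas n).sub humeas).abs)
    have hAsub : ∀ n, A n ⊆ G := fun n p hp => hp.1
    set K : Set (ℝ × ℝ) := (Icc (-M) M ×ˢ Icc (-M) M) ∩ {q : ℝ × ℝ | α ≤ |q.2 - q.1|}
      with hKdef
    have hmemK : ∀ n p, p ∈ A n → (u p, uε n p) ∈ K :=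
      fun n p hp => ⟨mem_prod.mpr ⟨huval p, huεval n p⟩, le_of_lt hp.2⟩
    rcases K.eq_empty_or_nonempty with hK | hK
    · have hAe : ∀ n, A n = ∅ := by
        intro n
        refine eq_empty_of_forall_notMem fun p hp => ?_
        have := hmemK n p hp
        rw [hK] at this
        exact this
      have : (fun n => volume (A n)) = fun _ => 0 := by
        funext n; rw [hAe n, measure_empty]
      rw [show (fun n => volume {p ∈ G | α < |uε n p - u p|}) = fun n => volume (A n) from rfl,
        this]
      exact tendsto_const_nhds
    · have hKcl : IsClosed {q : ℝ × ℝ | α ≤ |q.2 - q.1|} :=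
        isClosed_le continuous_const (continuous_snd.sub continuous_fst).abs
      have hKcomp : IsCompact K := (isCompact_Icc.prod isCompact_Icc).inter_right hKcl
      obtain ⟨q0, hq0K, hq0min⟩ := hKcomp.exists_isMinOn hK hΥc.continuousOn
      set c := Υ q0 with hcdef
      have hq0ne : q0.1 ≠ q0.2 := by
        intro h
        have := hq0K.2
        rw [mem_setOf_eq, h] at this
        simp at this
        linarith
      have hc : 0 < c := by
        rcases lt_or_gt_of_ne hq0ne with h | h
        · exact DefectAux.ups_pos hf hf'' hq0K.1.1.1 hq0K.1.2.2 h
        · rw [hcdef, hΥdef]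
          simp only
          rw [DefectAux.ups_symm]
          exact DefectAux.ups_pos hf hf'' hq0K.1.2.1 hq0K.1.1.2 h
      have hcK : ∀ q ∈ K, c ≤ Υ q := fun q hq => hq0min hq
      set J : ℕ → ℝ := fun n => ∫ p in A n, ρ p.2.2 ^ 2 with hJdef
      have hJle : ∀ n, c * J n ≤ ∫ p in G, Φ n p := by
        intro n
        have h1 : c * J n = ∫ p in A n, c * ρ p.2.2 ^ 2 :=
          (MeasureTheory.integral_const_mul c _).symm
        have h2 : (∫ p in A n, c * ρ p.2.2 ^ 2) ≤ ∫ p in A n, Φ n p := by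
          refine setIntegral_mono_on ((hρ2int.mono_set (hAsub n)).const_mul c)
            ((hΦint n).mono_set (hAsub n)) (hAmeas n) (fun p hp => ?_)
          rw [hΦeq]
          exact mul_le_mul_of_nonneg_right (hcK _ (hmemK n p hp)) (sq_nonneg _)
        have h3 : (∫ p in A n, Φ n p) ≤ ∫ p in G, Φ n p :=
          setIntegral_mono_set (hΦint n)
            (Filter.Eventually.of_forall (hΦnn n)) ((hAsub n).eventuallyLE)
        linarith
      have hJnn : ∀ n, 0 ≤ J n :=
        fun n => setIntegral_nonneg (hAmeas n) fun p _ => sq_nonneg _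
      have hJ0 : Tendsto J atTop (nhds 0) := by
        have hub : ∀ n, J n ≤ (1/c) * ∫ p in G, Φ n p := by
          intro n
          rw [← mul_le_mul_iff_right₀ hc]
          calc c * J n ≤ ∫ p in G, Φ n p := hJle n
            _ = c * ((1/c) * ∫ p in G, Φ n p) := by field_simp
        refine squeeze_zero hJnn hub ?_
        have := hdefect.const_mul (1/c)
        simpa using this
      rw [ENNReal.tendsto_nhds_zero]
      intro ε hε
      set Gd : ℕ → Set (ℝ × ℝ × (Fin N → ℝ)) := fun k => G ∩ {p | 1/((k:ℝ)+1) ≤ ρ p.2.2} with hGddef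
      have hGdmeas : ∀ k, MeasurableSet (Gd k) :=
        fun k => hGmeas.inter (measurableSet_le measurable_const hρymeas)
      have hanti : Antitone (fun k => G \ Gd k) := by
        intro k l hkl p hp
        refine ⟨hp.1, fun hmem => hp.2 ⟨hp.1, ?_⟩⟩
        have h2 : 1/((k:ℝ)+1) ≤ ρ p.2.2 := hmem.2
        refine le_trans ?_ h2
        apply one_div_le_one_div_of_le (by positivity)
        have hcast : (k:ℝ) ≤ (l:ℝ) := Nat.cast_le.mpr hkl
        linarith
      have hnull : volume (⋂ k, (G \ Gd k)) = 0 := by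
        have hsub2 : (⋂ k, (G \ Gd k)) ⊆ {p : ℝ × ℝ × (Fin N → ℝ) | ¬ (p ∈ G → 0 < ρ p.2.2)} := by
          intro p hp
          rw [mem_iInter] at hp
          have hpG : p ∈ G := (hp 0).1
          intro hcon
          have hpos := hcon hpG
          obtain ⟨k, hk⟩ := exists_nat_one_div_lt hpos
          exact (hp k).2 ⟨hpG, le_of_lt hk⟩
        refine measure_mono_null hsub2 ?_
        have := (ae_restrict_iff' hGmeas).mp hρpos
        rw [ae_iff] at this
        exact this
      have htend := tendsto_measure_iInter_atTop
        (fun k => ((hGmeas.diff (hGdmeas k)).nullMeasurableSet)) hanti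
        ⟨0, ((measure_mono diff_subset).trans_lt hGfin).ne⟩
      rw [hnull] at htend
      have hhalf : (0:ENNReal) < ε/2 := ENNReal.half_pos hε.ne'
      obtain ⟨k, hk⟩ := (htend.eventually (gt_mem_nhds hhalf)).exists
      set δ : ℝ := 1/((k:ℝ)+1) with hδdef
      have hδpos : 0 < δ := by positivity
      have hvol : ∀ n, volume (A n ∩ Gd k) ≤ ENNReal.ofReal (J n / δ^2) := by
        intro n
        set S := A n ∩ Gd k with hSdef
        have hSmeas : MeasurableSet S := (hAmeas n).inter (hGdmeas k)
        have hSsubG : S ⊆ G := fun p hp => hp.1.1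
        have hfin' : volume S ≠ ⊤ := ((measure_mono hSsubG).trans_lt hGfin).ne
        have h1 : δ^2 * (volume S).toReal ≤ ∫ p in S, ρ p.2.2 ^ 2 := by
          have hconst : (∫ _ in S, δ^2) = (volume S).toReal * δ^2 := by
            rw [setIntegral_const, smul_eq_mul]; rfl
          rw [mul_comm, ← hconst]
          refine setIntegral_mono_on ?_ (hρ2int.mono_set hSsubG) hSmeas (fun p hp => ?_)
          · exact integrableOn_const hfin'
          · exact pow_le_pow_left₀ hδpos.le hp.2.2 2
        have h2 : (∫ p in S, ρ p.2.2 ^ 2) ≤ J n :=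
          setIntegral_mono_set (hρ2int.mono_set (hAsub n))
            (Filter.Eventually.of_forall (fun p => sq_nonneg _))
            ((inter_subset_left).eventuallyLE)
        have h3 : (volume S).toReal ≤ J n / δ^2 := by
          rw [le_div_iff₀ (by positivity)]
          calc (volume S).toReal * δ^2 = δ^2 * (volume S).toReal := mul_comm _ _
            _ ≤ ∫ p in S, ρ p.2.2 ^ 2 := h1
            _ ≤ J n := h2
        calc volume S = ENNReal.ofReal ((volume S).toReal) :=
              (ENNReal.ofReal_toReal hfin').symm
          _ ≤ ENNReal.ofReal (J n / δ^2) := ENNReal.ofReal_le_ofReal h3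
      have hof : Tendsto (fun n => ENNReal.ofReal (J n / δ^2)) atTop (nhds 0) := by
        have h := hJ0.div_const (δ^2)
        rw [zero_div] at h
        have := (ENNReal.continuous_ofReal.tendsto 0).comp h
        simpa [Function.comp_def] using this
      filter_upwards [hof.eventually (gt_mem_nhds hhalf)] with n hn
      calc volume (A n) = volume (A n ∩ Gd k) + volume (A n \ Gd k) :=
            (measure_inter_add_diff _ (hGdmeas k)).symm
        _ ≤ ε/2 + ε/2 := add_le_add ((hvol n).trans hn.le)
            ((measure_mono (diff_subset_diff_left (hAsub n))).trans hk.le)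
        _ = ε := ENNReal.add_halves ε
  refine ⟨claim1, ?_⟩
  have htim : TendstoInMeasure (volume.restrict G) uε atTop u := by
    rw [tendstoInMeasure_iff_dist]; intro ε hε
    have h := claim1 (ε/2) (by linarith)
    have hb : ∀ n, (volume.restrict G) {x | ε ≤ dist (uε n x) (u x)}
        ≤ volume {p ∈ G | ε/2 < |uε n p - u p|} := by
      intro n
      rw [Measure.restrict_apply' hGmeas]
      apply measure_mono
      rintro p ⟨h1, h2⟩
      refine ⟨h2, ?_⟩
      have h1' : ε ≤ |uε n p - u p| := by simpa [Real.dist_eq] using h1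
      linarith
    exact tendsto_of_tendsto_of_tendsto_of_le_of_le tendsto_const_nhds h
      (fun n => zero_le) hb
  exact htim.exists_seq_tendsto_ae
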